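/- Let A be a finite abelian group (written additively) of exponent m, let u ∈ A, and let χ be a character of A with χ(u) ≠ 1. Then 1/(2·|A|) ≤ (1/(2·φ(m)·|A|)) · ∑_{0 < j ≤ m, gcd(j,m) = 1} |1 − χ(u)^j|² ≤ 2/|A|. -/

import Mathlib

open Finset

namespace Stmt4Aux

open ArithmeticFunction
open ArithmeticFunction.Moebius

/-- Sum of all `n`-th roots of unity in `ℂ`. -/
lemma sum_nthRoots (n : ℕ) (hn : 0 < n) :
    ∑ x ∈ Polynomial.nthRootsFinset n (1 : ℂ), x = if n = 1 then 1 else 0 := by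
  obtain ⟨w, hprim⟩ : ∃ w : ℂ, IsPrimitiveRoot w n := ⟨_, Complex.isPrimitiveRoot_exp n hn.ne'⟩
  haveI : NeZero n := ⟨hn.ne'⟩
  have himg : Polynomial.nthRootsFinset n (1 : ℂ) = (Finset.range n).image (w ^ ·) := by
    ext x
    simp only [Finset.mem_image, Finset.mem_range, Polynomial.mem_nthRootsFinset hn (1 : ℂ)]
    constructor
    · intro hx
      obtain ⟨i, hi, hix⟩ := hprim.eq_pow_of_pow_eq_one hx
      exact ⟨i, hi, hix⟩
    · rintro ⟨i, -, rfl⟩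
      rw [← pow_mul, mul_comm, pow_mul, hprim.pow_eq_one, one_pow]
  rw [himg, Finset.sum_image (fun a ha b hb hab =>
    hprim.pow_inj (Finset.mem_range.mp ha) (Finset.mem_range.mp hb) hab)]
  rcases eq_or_lt_of_le (Nat.one_le_iff_ne_zero.mpr hn.ne') with h1 | h1
  · rw [if_pos h1.symm, ← h1]
    simp
  · rw [if_neg (by omega), hprim.geom_sum_eq_zero h1]

/-- Sum of the primitive `n`-th roots of unity in `ℂ` is `μ n`. -/
lemma sum_primitiveRoots_eq_moebius (n : ℕ) (hn : 0 < n) :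
    ∑ x ∈ primitiveRoots n ℂ, x = (μ n : ℂ) := by
  have key : ∀ k > 0, ∑ i ∈ Nat.divisors k, (∑ x ∈ primitiveRoots i ℂ, x) =
      (fun k => if k = 1 then (1 : ℂ) else 0) k := by
    intro k hk
    haveI : NeZero k := ⟨hk.ne'⟩
    have hprim := Complex.isPrimitiveRoot_exp k hk.ne'
    show _ = if k = 1 then (1 : ℂ) else 0
    rw [← sum_nthRoots k hk, IsPrimitiveRoot.nthRoots_one_eq_biUnion_primitiveRoots,
      Finset.sum_biUnion (fun a _ b _ hab => IsPrimitiveRoot.disjoint hab)]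
  have h := (ArithmeticFunction.sum_eq_iff_sum_mul_moebius_eq.mp key) n hn
  rw [← h, Finset.sum_eq_single (n, 1)]
  · simp
  · rintro ⟨a, b⟩ hab hne
    rcases Nat.mem_divisorsAntidiagonal.mp hab with ⟨habn, hn0⟩
    have hb : b ≠ 1 := by
      intro hb1
      exact hne (by simp [hb1, ← habn, hb1])
    simp [hb]
  · intro h'
    exact absurd (Nat.mem_divisorsAntidiagonal.mpr ⟨mul_one n, hn.ne'⟩) h'

lemma card_ker_mul {G H : Type*} [Group G] [Group H]
    (π : G →* H) (hπ : Function.Surjective π) :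
    Nat.card G = Nat.card H * Nat.card π.ker := by
  rw [Subgroup.card_eq_card_quotient_mul_card_subgroup π.ker]
  congr 1
  exact Nat.card_congr (QuotientGroup.quotientKerEquivOfSurjective π hπ).toEquiv

lemma sum_comp_surjective {G H : Type*} [Group G] [Group H] [Fintype G] [Fintype H]
    [DecidableEq H] (π : G →* H) (hπ : Function.Surjective π) (f : H → ℂ) :
    ∑ x : G, f (π x) = (Nat.card π.ker : ℂ) * ∑ y : H, f y := by
  rw [Finset.mul_sum]
  rw [← Finset.sum_fiberwise_of_maps_to (t := (Finset.univ : Finset H))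
    (fun x (_ : x ∈ Finset.univ) => Finset.mem_univ (π x)) (fun x => f (π x))]
  refine Finset.sum_congr rfl fun y _ => ?_
  have h1 : ∀ x ∈ Finset.univ.filter fun x => π x = y, f (π x) = f y := fun x hx => by
    rw [(Finset.mem_filter.mp hx).2]
  rw [Finset.sum_congr rfl h1, Finset.sum_const, nsmul_eq_mul]
  congr 2
  have h2 : (Finset.univ.filter fun x => π x = y).card = Nat.card {x : G // π x = y} := by
    rw [Nat.card_eq_fintype_card, Fintype.card_subtype]
  rw [h2]
  exact Nat.card_congr ((Equiv.subtypeEquivRight (fun x => by simp)).trans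
    (MonoidHom.fiberEquivKerOfSurjective hπ y))

/-- The key Ramanujan-sum evaluation. -/
lemma key_sum (m : ℕ) (hm2 : 2 ≤ m) (z : ℂ) (hzm : z ^ m = 1) (hz1 : z ≠ 1) :
    ∃ (d K : ℕ), 2 ≤ d ∧ Nat.totient m = Nat.totient d * K ∧
      (μ d = 1 → 2 ≤ Nat.totient d) ∧
      (∑ j ∈ (Finset.Ioc 0 m).filter (fun j => Nat.gcd j m = 1), z ^ j)
        = (K : ℂ) * (μ d : ℂ) := by
  haveI : NeZero m := ⟨by omega⟩
  have hfin : IsOfFinOrder z := isOfFinOrder_iff_pow_eq_one.mpr ⟨m, by omega, hzm⟩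
  set d := orderOf z with hd
  have hdm : d ∣ m := orderOf_dvd_of_pow_eq_one hzm
  have hd1 : d ≠ 1 := fun h => hz1 (orderOf_eq_one_iff.mp h)
  have hd0 : d ≠ 0 := hfin.orderOf_pos.ne'
  have hd2 : 2 ≤ d := by omega
  haveI : NeZero d := ⟨hd0⟩
  have hprim : IsPrimitiveRoot z d := IsPrimitiveRoot.orderOf z
  set π := ZMod.unitsMap hdm with hπdef
  have hsurj : Function.Surjective π := ZMod.unitsMap_surjective hdm
  refine ⟨d, Nat.card π.ker, hd2, ?_, ?_, ?_⟩
  · have h := card_ker_mul π hsurj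
    rwa [Nat.card_eq_fintype_card, Nat.card_eq_fintype_card (α := (ZMod d)ˣ),
      ZMod.card_units_eq_totient, ZMod.card_units_eq_totient] at h
  · intro hμ1
    by_contra h
    have h1 : Nat.totient d = 1 := by
      have := Nat.totient_pos.mpr (by omega : 0 < d)
      omega
    have : d = 2 := by rcases Nat.totient_eq_one_iff.mp h1 with h' | h' <;> omega
    rw [this, moebius_apply_prime Nat.prime_two] at hμ1
    omega
  · -- step 1 : reindex over units of ZMod m
    have step1 : ∑ j ∈ (Finset.Ioc 0 m).filter (fun j => Nat.gcd j m = 1), z ^ j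
        = ∑ x : (ZMod m)ˣ, z ^ ((x : ZMod m).val) := by
      have hmem : ∀ j ∈ (Finset.Ioc 0 m).filter (fun j => Nat.gcd j m = 1),
          Nat.Coprime j m := fun j hj => (Finset.mem_filter.mp hj).2
      have hlt : ∀ j ∈ (Finset.Ioc 0 m).filter (fun j => Nat.gcd j m = 1), j < m := by
        intro j hj
        rcases Finset.mem_filter.mp hj with ⟨hj1, hj2⟩
        rcases Finset.mem_Ioc.mp hj1 with ⟨hj3, hj4⟩
        rcases lt_or_eq_of_le hj4 with h | h
        · exact h
        · exfalso; rw [h] at hj2; rw [Nat.gcd_self] at hj2; omega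
      refine Finset.sum_bij' (fun j hj => ZMod.unitOfCoprime j (hmem j hj))
        (fun x _ => (x : ZMod m).val) (fun j hj => Finset.mem_univ _)
        (fun x _ => ?_) (fun j hj => ?_) (fun x _ => ?_) (fun j hj => ?_)
      · -- val x is in the filter
        have hco := ZMod.val_coe_unit_coprime x
        have hvlt : ((x : ZMod m)).val < m := ZMod.val_lt _
        have hvpos : 0 < ((x : ZMod m)).val := by
          rcases Nat.eq_zero_or_pos ((x : ZMod m)).val with h | h
          · exfalso
            rw [h] at hco
            have : m = 1 := by simpa [Nat.Coprime] using hco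
            omega
          · exact h
        exact Finset.mem_filter.mpr ⟨Finset.mem_Ioc.mpr ⟨hvpos, hvlt.le⟩, hco⟩
      · -- left inverse
        show ((ZMod.unitOfCoprime j (hmem j hj) : ZMod m)).val = j
        rw [ZMod.coe_unitOfCoprime, ZMod.val_natCast, Nat.mod_eq_of_lt (hlt j hj)]
      · -- right inverse
        exact Units.ext (by simp [ZMod.coe_unitOfCoprime, ZMod.natCast_rightInverse _])
      · -- values agree
        show z ^ j = z ^ ((ZMod.unitOfCoprime j (hmem j hj) : ZMod m)).val
        rw [ZMod.coe_unitOfCoprime, ZMod.val_natCast, Nat.mod_eq_of_lt (hlt j hj)]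
    -- step 2 : the summand factors through π
    have step2 : ∀ x : (ZMod m)ˣ,
        z ^ ((x : ZMod m).val) = z ^ (((π x : (ZMod d)ˣ) : ZMod d)).val := by
      intro x
      have hcoe : ((π x : (ZMod d)ˣ) : ZMod d) = (((x : ZMod m).val : ℕ) : ZMod d) := by
        rw [hπdef, ZMod.unitsMap_def]
        simp only [Units.coe_map, MonoidHom.coe_coe]
        conv_lhs => rw [← ZMod.natCast_rightInverse (x : ZMod m)]
        rw [map_natCast]
      rw [hcoe, ZMod.val_natCast]
      exact (pow_mod_orderOf z _).symm
    -- step 3 : collapse the fibers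
    have step3 : ∑ x : (ZMod m)ˣ, z ^ ((x : ZMod m).val)
        = (Nat.card π.ker : ℂ) * ∑ y : (ZMod d)ˣ, z ^ ((y : ZMod d).val) := by
      rw [Finset.sum_congr rfl (fun x _ => step2 x)]
      exact sum_comp_surjective π hsurj (fun y => z ^ ((y : ZMod d).val))
    -- step 4 : sum over units of ZMod d is the sum of primitive roots
    have step4 : ∑ y : (ZMod d)ˣ, z ^ ((y : ZMod d).val)
        = ∑ x ∈ primitiveRoots d ℂ, x := by
      refine Finset.sum_bij (fun y _ => z ^ ((y : ZMod d).val)) ?_ ?_ ?_ (fun _ _ => rfl)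
      · intro y _
        exact (mem_primitiveRoots (by omega)).mpr
          (hprim.pow_of_coprime _ (ZMod.val_coe_unit_coprime y))
      · intro y1 _ y2 _ heq
        have := hprim.pow_inj (ZMod.val_lt _) (ZMod.val_lt _) heq
        exact Units.ext (ZMod.val_injective d this)
      · intro ξ hξ
        have hξ' := (mem_primitiveRoots (by omega : 0 < d)).mp hξ
        obtain ⟨i, hid, hic, hiξ⟩ := hprim.isPrimitiveRoot_iff.mp hξ'
        refine ⟨ZMod.unitOfCoprime i hic, Finset.mem_univ _, ?_⟩
        show z ^ (((ZMod.unitOfCoprime i hic : (ZMod d)ˣ) : ZMod d)).val = ξ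
        rw [ZMod.coe_unitOfCoprime, ZMod.val_natCast, Nat.mod_eq_of_lt hid, hiξ]
    rw [step1, step3, step4, sum_primitiveRoots_eq_moebius d (by omega)]

end Stmt4Aux

theorem stmt_4 (A : Type*) [AddCommGroup A] [Fintype A]
    (m : ℕ) (hm : m = AddMonoid.exponent A)
    (u : A) (χ : AddChar A ℂ) (hχu : χ u ≠ 1) :
    1 / (2 * (Fintype.card A : ℝ)) ≤
        (1 / (2 * (Nat.totient m : ℝ) * (Fintype.card A : ℝ))) *
          ∑ j ∈ (Finset.Ioc 0 m).filter (fun j => Nat.gcd j m = 1),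
            ‖1 - χ u ^ j‖ ^ 2 ∧
      (1 / (2 * (Nat.totient m : ℝ) * (Fintype.card A : ℝ))) *
          ∑ j ∈ (Finset.Ioc 0 m).filter (fun j => Nat.gcd j m = 1),
            ‖1 - χ u ^ j‖ ^ 2 ≤ 2 / (Fintype.card A : ℝ) := by
  classical
  have hm0 : m ≠ 0 := by rw [hm]; exact AddMonoid.exponent_ne_zero_of_finite
  have hmu : m • u = 0 := by rw [hm]; exact AddMonoid.exponent_nsmul_eq_zero u
  have hζm : χ u ^ m = 1 := by
    rw [← AddChar.map_nsmul_eq_pow, hmu, AddChar.map_zero_eq_one]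
  have hm2 : 2 ≤ m := by
    by_contra h
    have : m = 1 := by omega
    rw [this, pow_one] at hζm
    exact hχu hζm
  obtain ⟨d, K, hd2, htot, hμφ, hsum⟩ := Stmt4Aux.key_sum m hm2 (χ u) hζm hχu
  -- the summation set has cardinality totient m
  have hT : ((Finset.Ioc 0 m).filter (fun j => Nat.gcd j m = 1)).card = Nat.totient m := by
    rw [Nat.totient_eq_card_coprime]
    congr 1
    ext j
    simp only [Finset.mem_filter, Finset.mem_Ioc, Finset.mem_range]
    constructor
    · rintro ⟨⟨h1, h2⟩, h3⟩
      refine ⟨?_, Nat.coprime_comm.mp h3⟩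
      rcases lt_or_eq_of_le h2 with h | h
      · exact h
      · exfalso; rw [h, Nat.gcd_self] at h3; omega
    · rintro ⟨h1, h2⟩
      have h3 : Nat.gcd j m = 1 := Nat.coprime_comm.mp h2
      refine ⟨⟨?_, h1.le⟩, h3⟩
      rcases Nat.eq_zero_or_pos j with h | h
      · exfalso; rw [h] at h3; simp [Nat.gcd_zero_left] at h3; omega
      · exact h
  -- norm of χ u is 1
  have habs : ∀ j : ℕ, ‖χ u ^ j‖ = 1 := by
    intro j
    have h1 : ‖χ u‖ = 1 := by
      exact Complex.norm_eq_one_of_pow_eq_one hζm hm0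
    rw [norm_pow, h1, one_pow]
  -- per-term formula
  have hterm : ∀ j : ℕ, ‖1 - χ u ^ j‖ ^ 2 = 2 - 2 * (χ u ^ j).re := by
    intro j
    have h1 : Complex.normSq (χ u ^ j) = 1 := by
      rw [← Complex.sq_norm, habs j, one_pow]
    have h2 : ((1 : ℂ) * (starRingEnd ℂ) (χ u ^ j)).re = (χ u ^ j).re := by
      rw [one_mul, Complex.conj_re]
    rw [Complex.sq_norm, Complex.normSq_sub, Complex.normSq_one, h1, h2]
    ring
  set T := (Finset.Ioc 0 m).filter (fun j => Nat.gcd j m = 1) with hTdef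
  have hre : (∑ j ∈ T, (χ u ^ j).re) = (K : ℝ) * (ArithmeticFunction.moebius d : ℝ) := by
    have := congrArg Complex.re hsum
    rw [Complex.re_sum] at this
    simpa using this
  have hSig : ∑ j ∈ T, ‖1 - χ u ^ j‖ ^ 2
      = 2 * (Nat.totient m : ℝ) - 2 * ((K : ℝ) * (ArithmeticFunction.moebius d : ℝ)) := by
    rw [Finset.sum_congr rfl (fun j _ => hterm j), Finset.sum_sub_distrib,
      Finset.sum_const, ← Finset.mul_sum, hre, hT, nsmul_eq_mul, mul_comm]
  -- bounds on K * μ d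
  have hμcases : ArithmeticFunction.moebius d = 0 ∨ ArithmeticFunction.moebius d = 1 ∨ ArithmeticFunction.moebius d = -1 := by
    by_cases hsq : Squarefree d
    · rw [ArithmeticFunction.moebius_apply_of_squarefree hsq]
      rcases Nat.even_or_odd (ArithmeticFunction.cardFactors d) with h | h
      · right; left; exact Even.neg_one_pow h
      · right; right; exact Odd.neg_one_pow h
    · left; exact ArithmeticFunction.moebius_eq_zero_of_not_squarefree hsq
  have hφd : 1 ≤ Nat.totient d := Nat.totient_pos.mpr (by omega)
  have hKt : K ≤ Nat.totient m := by
    calc K = 1 * K := (one_mul K).symm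
    _ ≤ Nat.totient d * K := Nat.mul_le_mul_right K hφd
    _ = Nat.totient m := htot.symm
  have hup : (K : ℝ) * (ArithmeticFunction.moebius d : ℝ) ≤ (Nat.totient m : ℝ) / 2 := by
    rcases hμcases with h | h | h
    · rw [h]; simp only [Int.cast_zero, mul_zero]; positivity
    · rw [h]
      have h2 : 2 ≤ Nat.totient d := hμφ h
      have : 2 * K ≤ Nat.totient m := by
        calc 2 * K ≤ Nat.totient d * K := Nat.mul_le_mul_right K h2
        _ = Nat.totient m := htot.symm
      have := (Nat.cast_le (α := ℝ)).mpr this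
      push_cast at this ⊢
      linarith
    · rw [h]
      push_cast
      have : (0:ℝ) ≤ (K:ℝ) := Nat.cast_nonneg K
      have h2 : (0:ℝ) ≤ (Nat.totient m : ℝ) := Nat.cast_nonneg _
      linarith
  have hlo : -(Nat.totient m : ℝ) ≤ (K : ℝ) * (ArithmeticFunction.moebius d : ℝ) := by
    have hK : (K : ℝ) ≤ (Nat.totient m : ℝ) := (Nat.cast_le (α := ℝ)).mpr hKt
    have hK0 : (0:ℝ) ≤ (K : ℝ) := Nat.cast_nonneg K
    rcases hμcases with h | h | h <;> rw [h] <;> push_cast <;> linarith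
  -- final assembly
  have hφm : (0:ℝ) < (Nat.totient m : ℝ) := by
    have : 0 < Nat.totient m := Nat.totient_pos.mpr (by omega)
    exact_mod_cast this
  have hc : (0:ℝ) < (Fintype.card A : ℝ) := by
    have : 0 < Fintype.card A := Fintype.card_pos
    exact_mod_cast this
  constructor
  · rw [hSig, one_div_mul_eq_div, div_le_div_iff₀ (by positivity) (by positivity)]
    nlinarith [mul_le_mul_of_nonneg_right hup hc.le]
  · rw [hSig, one_div_mul_eq_div, div_le_div_iff₀ (by positivity) (by positivity)]
    nlinarith [mul_le_mul_of_nonneg_right hlo hc.le]
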